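/- Let q ≥ 2 be an integer and t > 0 a real number such that q(q−1)t is a positive integer. Then the n-th digit t^(n) of t in base q is constant for all n ≥ 2, and this constant value is nonzero. -/

import Mathlib

/-- The `n`-th digit of `t` in base `q`. -/
noncomputable def baseDigit (q : ℤ) (t : ℝ) (n : ℤ) : ℤ :=
  ⌈t * (q : ℝ) ^ n - 1⌉ - q * ⌈t * (q : ℝ) ^ (n - 1) - 1⌉

lemma ceil_div_aux (d s r : ℤ) (hd : 0 < d) (hr0 : 0 ≤ r) (hr : r < d) :
    ⌈((d * s + r : ℤ) : ℝ) / ((d : ℤ) : ℝ)⌉ = s + (if r = 0 then 0 else 1) := by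
  have hd' : (d : ℝ) ≠ 0 := by exact_mod_cast hd.ne'
  push_cast
  rw [add_div, mul_comm, mul_div_assoc, div_self hd', mul_one, add_comm,
    Int.ceil_add_intCast]
  have hc : ⌈(r:ℝ) / (d:ℝ)⌉ = if r = 0 then 0 else 1 := by
    by_cases h0 : r = 0
    · simp [h0]
    · have h0' : 0 < r := lt_of_le_of_ne hr0 (Ne.symm h0)
      have h1 : (0:ℝ) < (r:ℝ) / (d:ℝ) := by
        apply div_pos <;> exact_mod_cast (by assumption)
      have h2 : (r:ℝ) / (d:ℝ) ≤ 1 := by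
        rw [div_le_one (by exact_mod_cast hd)]
        exact_mod_cast hr.le
      simp only [h0, if_false]
      rw [Int.ceil_eq_iff]
      refine ⟨?_, by exact_mod_cast h2⟩
      push_cast; linarith
  rw [hc]; ring

/-- If `q(q−1)t` is a positive integer, then the digits `t^(n)` are constant for `n ≥ 2`,
with nonzero constant value. -/
theorem digit_eventually_constant (q : ℤ) (hq : 2 ≤ q) (t : ℝ) (ht : 0 < t)
    (h : ∃ k : ℕ, 0 < k ∧ (q : ℝ) * ((q : ℝ) - 1) * t = (k : ℝ)) :
    ∃ l : ℤ, l ≠ 0 ∧ ∀ n : ℤ, 2 ≤ n → baseDigit q t n = l := by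
  obtain ⟨k, hk, htk⟩ := h
  set K : ℤ := (k : ℤ) with hK
  have hd : 0 < q - 1 := by omega
  have hq1 : ((q : ℝ) - 1) ≠ 0 := by
    have : ((q - 1 : ℤ) : ℝ) ≠ 0 := by exact_mod_cast hd.ne'
    push_cast at this; exact this
  set r : ℤ := K % (q - 1) with hr
  have hr0 : 0 ≤ r := Int.emod_nonneg _ (by omega)
  have hrd : r < q - 1 := Int.emod_lt_of_pos _ hd
  -- key real equation
  have key : ∀ m : ℕ, t * (q : ℝ) ^ ((m : ℤ) + 1) =
      ((K * q ^ m : ℤ) : ℝ) / ((q - 1 : ℤ) : ℝ) := by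
    intro m
    rw [show ((m : ℤ) + 1) = ((m + 1 : ℕ) : ℤ) by push_cast; ring, zpow_natCast]
    rw [hK]
    push_cast
    rw [eq_div_iff hq1]
    rw [show ((k : ℝ)) = (q : ℝ) * ((q : ℝ) - 1) * t from htk.symm]
    ring
  -- mod fact
  have hmodq : (q : ℤ) ≡ 1 [ZMOD q - 1] := by
    rw [Int.modEq_iff_dvd]
    exact ⟨-1, by ring⟩
  have hM : ∀ m : ℕ, (K * q ^ m) % (q - 1) = r := by
    intro m
    have := (hmodq.pow m).mul_left K
    simpa [Int.ModEq, hr] using this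
  -- ceil computation
  have hceil : ∀ m : ℕ, ⌈t * (q : ℝ) ^ ((m : ℤ) + 1) - 1⌉ =
      (K * q ^ m) / (q - 1) + (if r = 0 then 0 else 1) - 1 := by
    intro m
    rw [show t * (q : ℝ) ^ ((m : ℤ) + 1) - 1 =
        t * (q : ℝ) ^ ((m : ℤ) + 1) - (1 : ℤ) by push_cast; ring,
      Int.ceil_sub_intCast, key m]
    have hdecomp : K * q ^ m = (q - 1) * ((K * q ^ m) / (q - 1)) + r := by
      rw [← hM m]; exact (Int.mul_ediv_add_emod _ _).symm
    rw [show K * q ^ m = (q - 1) * ((K * q ^ m) / (q - 1)) + r from hdecomp]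
    rw [ceil_div_aux _ _ _ hd hr0 hrd]
    rw [← hdecomp]
  refine ⟨if r = 0 then q - 1 else r, by split <;> omega, ?_⟩
  intro n hn
  obtain ⟨j, hj⟩ := Int.le.dest hn
  subst hj
  unfold baseDigit
  have e1 : (2 : ℤ) + j = ((j + 1 : ℕ) : ℤ) + 1 := by push_cast; ring
  have e2 : (2 : ℤ) + j - 1 = ((j : ℕ) : ℤ) + 1 := by push_cast; ring
  rw [e2, e1, hceil (j + 1), hceil j]
  -- integer arithmetic
  set A := (K * q ^ (j + 1)) / (q - 1) with hA
  set B := (K * q ^ j) / (q - 1) with hB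
  have hdA : K * q ^ (j + 1) = (q - 1) * A + r := by
    rw [← hM (j + 1), hA]; exact (Int.mul_ediv_add_emod _ _).symm
  have hdB : K * q ^ j = (q - 1) * B + r := by
    rw [← hM j, hB]; exact (Int.mul_ediv_add_emod _ _).symm
  have hAB : A = q * B + r := by
    have h1 : K * q ^ (j + 1) = q * (K * q ^ j) := by ring
    have h2 : (q - 1) * A + r = q * ((q - 1) * B + r) := by
      rw [← hdA, ← hdB]; exact h1
    have : (q - 1) * A = (q - 1) * (q * B + r) := by ring_nf; ring_nf at h2; linarith
    exact mul_left_cancel₀ (by omega) this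
  by_cases h0 : r = 0
  · simp only [h0, if_true]
    linear_combination hAB + h0
  · simp only [h0, if_false]
    linear_combination hAB
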